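/- arXiv:2304.00801 — 7 statements merged into one kernel-verified Lean document; each statement's English description precedes it below -/
import Mathlib

section
/- For any measurable function m : Ω → [0,1] on a probability space (Ω, λ), the infimum of the soft-Dice loss SD_m(c) = 1 − 2∫cm dλ/(‖c‖₁ + ‖m‖₁) over measurable c : Ω → [0,1] equals 1 minus the supremum of the Dice score D_m(s) = 2∫sm dλ/(‖s‖₁ + ‖m‖₁) over measurable binary functions s : Ω → {0,1}. That is, inf_{c∈M} SD_m(c) = 1 − sup_{s∈S} D_m(s). -/
open MeasureTheory Filter

noncomputable section

/-- The unit cube `[0,1]^n`. -/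
def cube (n : ℕ) : Set (Fin n → ℝ) := Set.univ.pi fun _ => Set.Icc (0:ℝ) 1

/-- The (normalized) Lebesgue measure on the unit cube. -/
def lam (n : ℕ) : Measure (Fin n → ℝ) := volume.restrict (cube n)

/-- The `L¹`-volume `‖f‖₁ = ∫ f dλ` (for nonnegative `f`). -/
def vol1 (n : ℕ) (f : (Fin n → ℝ) → ℝ) : ℝ := ∫ ω, f ω ∂(lam n)

/-- The Dice score `D_m(s) = 2∫ s·m dλ / (‖s‖₁ + ‖m‖₁)`. -/
def Dice (n : ℕ) (m s : (Fin n → ℝ) → ℝ) : ℝ :=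
  2 * (∫ ω, s ω * m ω ∂(lam n)) / (vol1 n s + vol1 n m)

/-- The soft-Dice loss `SD_m(c) = 1 - 2∫ c·m dλ / (‖c‖₁ + ‖m‖₁)`. -/
def softDice (n : ℕ) (m c : (Fin n → ℝ) → ℝ) : ℝ :=
  1 - 2 * (∫ ω, c ω * m ω ∂(lam n)) / (vol1 n c + vol1 n m)

/-- Membership in `M`: measurable with values in `[0,1]`. -/
def MemM (n : ℕ) (m : (Fin n → ℝ) → ℝ) : Prop :=
  Measurable m ∧ ∀ ω, m ω ∈ Set.Icc (0:ℝ) 1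

/-- Membership in `S`: measurable with values in `{0,1}`. -/
def MemS (n : ℕ) (s : (Fin n → ℝ) → ℝ) : Prop :=
  Measurable s ∧ ∀ ω, s ω = 0 ∨ s ω = 1

/-- The set of soft-Dice values over `M`. -/
def SDvals (n : ℕ) (m : (Fin n → ℝ) → ℝ) : Set ℝ :=
  {x : ℝ | ∃ c, MemM n c ∧ x = softDice n m c}

/-- The set of Dice values over `S`. -/
def Dvals (n : ℕ) (m : (Fin n → ℝ) → ℝ) : Set ℝ :=
  {x : ℝ | ∃ s, MemS n s ∧ x = Dice n m s}


open Set in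
private lemma layercake_aux' {Ω : Type*} [MeasurableSpace Ω] (ρ : Measure Ω) [IsFiniteMeasure ρ]
    {c : Ω → ℝ} (hc : Measurable c) (h0 : ∀ ω, 0 ≤ c ω) (h1 : ∀ ω, c ω ≤ 1) :
    ∫ ω, c ω ∂ρ = ∫ t in Ioc (0:ℝ) 1, (ρ {ω | t < c ω}).toReal := by
  set B : ℝ → ℝ := fun t => (ρ {ω | t < c ω}).toReal with hB
  have hBanti : Antitone B := by
    intro t t' htt'
    exact ENNReal.toReal_mono (measure_ne_top _ _)
      (measure_mono (fun ω hω => lt_of_le_of_lt htt' hω))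
  have hBnn : ∀ t, 0 ≤ B t := fun t => ENNReal.toReal_nonneg
  have hBle : ∀ t, B t ≤ (ρ univ).toReal := fun t =>
    ENNReal.toReal_mono (measure_ne_top _ _) (measure_mono (subset_univ _))
  have hBint : IntegrableOn B (Ioc (0:ℝ) 1) := by
    refine ((integrableOn_const (C := (ρ univ).toReal) ?_)).mono'
      hBanti.measurable.aestronglyMeasurable ?_
    · simp [Real.volume_Ioc]
    · filter_upwards with t
      rw [Real.norm_eq_abs, abs_of_nonneg (hBnn t)]
      exact hBle t
  have hcint : Integrable c ρ := by
    refine (integrable_const (1:ℝ)).mono' hc.aestronglyMeasurable ?_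
    filter_upwards with ω
    rw [Real.norm_eq_abs, abs_of_nonneg (h0 ω)]
    exact h1 ω
  have key := lintegral_eq_lintegral_meas_lt ρ (Filter.Eventually.of_forall h0) hc.aemeasurable
  have hsplit : ∫⁻ t in Ioi (0:ℝ), ρ {a | t < c a}
      = ∫⁻ t in Ioc (0:ℝ) 1, ρ {a | t < c a} := by
    rw [← Ioc_union_Ioi_eq_Ioi (zero_le_one (α := ℝ)),
      lintegral_union measurableSet_Ioi]
    · have : ∫⁻ t in Ioi (1:ℝ), ρ {a | t < c a} = 0 := by
        rw [setLIntegral_congr_fun measurableSet_Ioi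
          (fun t (ht : 1 < t) => ?_), lintegral_zero]
        have : {a | t < c a} = (∅ : Set Ω) := by
          ext a; simp only [mem_setOf_eq, mem_empty_iff_false, iff_false, not_lt]
          exact (h1 a).trans ht.le
        simp [this]
      rw [this, add_zero]
    · exact Set.disjoint_left.2 fun t ht ht' => absurd ht' (not_lt.2 ht.2)
  have hofB : ∫⁻ t in Ioc (0:ℝ) 1, ρ {a | t < c a}
      = ∫⁻ t in Ioc (0:ℝ) 1, ENNReal.ofReal (B t) := by
    refine lintegral_congr (fun t => ?_)
    rw [hB, ENNReal.ofReal_toReal (measure_ne_top _ _)]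
  have hL : ENNReal.ofReal (∫ ω, c ω ∂ρ) = ∫⁻ ω, ENNReal.ofReal (c ω) ∂ρ :=
    ofReal_integral_eq_lintegral_ofReal hcint (Filter.Eventually.of_forall h0)
  have hR : ENNReal.ofReal (∫ t in Ioc (0:ℝ) 1, B t)
      = ∫⁻ t in Ioc (0:ℝ) 1, ENNReal.ofReal (B t) :=
    ofReal_integral_eq_lintegral_ofReal hBint (Filter.Eventually.of_forall hBnn)
  have : ENNReal.ofReal (∫ ω, c ω ∂ρ) = ENNReal.ofReal (∫ t in Ioc (0:ℝ) 1, B t) := by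
    rw [hL, hR, key, hsplit, hofB]
  exact (ENNReal.ofReal_eq_ofReal_iff (integral_nonneg h0)
    (setIntegral_nonneg measurableSet_Ioc (fun t _ => hBnn t))).1 this

private lemma volume_cube' (n : ℕ) : MeasureTheory.volume (cube n) = 1 := by
  rw [cube, volume_pi_pi]
  simp [Real.volume_Icc]

instance (n : ℕ) : IsProbabilityMeasure (lam n) := by
  constructor
  rw [lam, Measure.restrict_apply_univ, volume_cube']

private lemma memM_integrable' {n : ℕ} {f : (Fin n → ℝ) → ℝ} (hf : MemM n f) :
    Integrable f (lam n) := by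
  refine (integrable_const (1:ℝ)).mono' hf.1.aestronglyMeasurable ?_
  filter_upwards with ω
  rw [Real.norm_eq_abs, abs_of_nonneg (hf.2 ω).1]
  exact (hf.2 ω).2

private lemma memS_memM' {n : ℕ} {s : (Fin n → ℝ) → ℝ} (hs : MemS n s) : MemM n s :=
  ⟨hs.1, fun ω => by rcases hs.2 ω with h | h <;> simp [h]⟩

open Set in
private lemma exists_threshold' {n : ℕ} {m c : (Fin n → ℝ) → ℝ} (hm : MemM n m)
    (hK : 0 < vol1 n m) (hc : MemM n c) :
    ∃ s, MemS n s ∧ Dice n m c ≤ Dice n m s := by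
  set μ := lam n with hμ
  set K := vol1 n m with hKdef
  set A : ℝ → ℝ := fun t => ∫ ω in {ω | t < c ω}, m ω ∂μ with hA
  set B : ℝ → ℝ := fun t => (μ {ω | t < c ω}).toReal with hB
  have hmint : Integrable m μ := memM_integrable' hm
  have hmnn : ∀ ω, 0 ≤ m ω := fun ω => (hm.2 ω).1
  have hset : ∀ t : ℝ, MeasurableSet {ω | t < c ω} := fun t =>
    measurableSet_lt measurable_const hc.1
  have LC1 : ∫ ω, c ω ∂μ = ∫ t in Ioc (0:ℝ) 1, B t :=
    layercake_aux' μ hc.1 (fun ω => (hc.2 ω).1) (fun ω => (hc.2 ω).2)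
  set ν : Measure (Fin n → ℝ) := μ.withDensity (fun ω => ENNReal.ofReal (m ω)) with hν
  have hνfin : IsFiniteMeasure ν := by
    constructor
    rw [hν, withDensity_apply _ MeasurableSet.univ, Measure.restrict_univ]
    calc ∫⁻ ω, ENNReal.ofReal (m ω) ∂μ ≤ ∫⁻ _, 1 ∂μ :=
          lintegral_mono fun ω => by
            simpa using ENNReal.ofReal_le_ofReal (hm.2 ω).2
      _ < ⊤ := by simp [lintegral_one]
  have hνset : ∀ t : ℝ, ν {ω | t < c ω} = ENNReal.ofReal (A t) := by
    intro t
    rw [hν, withDensity_apply _ (hset t)]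
    exact (ofReal_integral_eq_lintegral_ofReal (hmint.restrict)
      (Filter.Eventually.of_forall hmnn)).symm
  have LC2 : ∫ ω, c ω * m ω ∂μ = ∫ t in Ioc (0:ℝ) 1, A t := by
    have h1 : ∫ ω, c ω ∂ν = ∫ ω, c ω * m ω ∂μ := by
      have : ∫ ω, c ω ∂ν = ∫ ω, (Real.toNNReal (m ω)) • c ω ∂μ := by
        rw [hν]
        exact integral_withDensity_eq_integral_smul (hm.1.real_toNNReal) c
      rw [this]
      congr 1
      ext ω
      rw [NNReal.smul_def, smul_eq_mul, Real.coe_toNNReal _ (hmnn ω), mul_comm]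
    have h2 := layercake_aux' ν hc.1 (fun ω => (hc.2 ω).1) (fun ω => (hc.2 ω).2)
    rw [← h1, h2]
    refine setIntegral_congr_fun measurableSet_Ioc (fun t _ => ?_)
    rw [hνset t, ENNReal.toReal_ofReal (setIntegral_nonneg (hset t) (fun ω _ => hmnn ω))]
  have hAnn : ∀ t, 0 ≤ A t := fun t => setIntegral_nonneg (hset t) (fun ω _ => hmnn ω)
  have hAanti : Antitone A := by
    intro t t' htt'
    exact setIntegral_mono_set hmint.integrableOn
      (Filter.Eventually.of_forall hmnn)
      (HasSubset.Subset.eventuallyLE (fun ω hω => lt_of_le_of_lt htt' hω))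
  have hAle : ∀ t, A t ≤ K := fun t =>
    setIntegral_le_integral hmint (Filter.Eventually.of_forall hmnn)
  have hAint : IntegrableOn A (Ioc (0:ℝ) 1) := by
    refine ((integrableOn_const (C := K) ?_)).mono'
      hAanti.measurable.aestronglyMeasurable ?_
    · simp [Real.volume_Ioc]
    · filter_upwards with t
      rw [Real.norm_eq_abs, abs_of_nonneg (hAnn t)]
      exact hAle t
  have hBnn : ∀ t, 0 ≤ B t := fun t => ENNReal.toReal_nonneg
  have hBanti : Antitone B := by
    intro t t' htt'
    exact ENNReal.toReal_mono (measure_ne_top _ _)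
      (measure_mono (fun ω hω => lt_of_le_of_lt htt' hω))
  have hBint : IntegrableOn B (Ioc (0:ℝ) 1) := by
    refine ((integrableOn_const (C := (1:ℝ)) ?_)).mono'
      hBanti.measurable.aestronglyMeasurable ?_
    · simp [Real.volume_Ioc]
    · filter_upwards with t
      rw [Real.norm_eq_abs, abs_of_nonneg (hBnn t)]
      have : μ {ω | t < c ω} ≤ 1 := by
        rw [← measure_univ (μ := μ)]
        exact measure_mono (subset_univ _)
      calc B t ≤ (1 : ENNReal).toReal := ENNReal.toReal_mono (by simp) this
        _ = 1 := by simp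
  set D : ℝ := ∫ ω, c ω ∂μ + K with hD
  have hcnn : 0 ≤ ∫ ω, c ω ∂μ := integral_nonneg (fun ω => (hc.2 ω).1)
  have hDpos : 0 < D := by rw [hD]; linarith
  set r : ℝ := (∫ ω, c ω * m ω ∂μ) / D with hr
  have hrD : ∫ ω, c ω * m ω ∂μ = r * D := by
    rw [hr]; field_simp
  have hexists : ∃ t ∈ Ioc (0:ℝ) 1, r * (B t + K) ≤ A t := by
    by_contra hcon
    push_neg at hcon
    set g : ℝ → ℝ := fun t => r * (B t + K) - A t with hg
    have hgint : IntegrableOn g (Ioc (0:ℝ) 1) := by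
      refine Integrable.sub (Integrable.const_mul ?_ r) hAint
      exact hBint.add (integrableOn_const (by simp [Real.volume_Ioc]))
    have hgzero : ∫ t in Ioc (0:ℝ) 1, g t = 0 := by
      have h3 : ∫ t in Ioc (0:ℝ) 1, (K : ℝ) = K := by
        rw [setIntegral_const, Real.volume_real_Ioc]
        simp
      have : ∫ t in Ioc (0:ℝ) 1, g t
          = r * ((∫ t in Ioc (0:ℝ) 1, B t) + K) - ∫ t in Ioc (0:ℝ) 1, A t := by
        rw [hg]
        rw [integral_sub (by exact Integrable.const_mul (hBint.add
          (integrableOn_const (by simp [Real.volume_Ioc]))) r) hAint]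
        congr 1
        rw [integral_const_mul]
        congr 1
        rw [integral_add hBint (integrableOn_const (by simp [Real.volume_Ioc])), h3]
      rw [this, ← LC1, ← LC2, ← hD, ← hrD, sub_self]
    have hgnn : 0 ≤ᵐ[volume.restrict (Ioc (0:ℝ) 1)] g := by
      filter_upwards [ae_restrict_mem measurableSet_Ioc] with t ht
      exact le_of_lt (sub_pos.2 (hcon t ht))
    have hgeq := (integral_eq_zero_iff_of_nonneg_ae hgnn hgint).1 hgzero
    have hne : (volume.restrict (Ioc (0:ℝ) 1) : Measure ℝ) ≠ 0 := by
      intro h0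
      have h1 : (volume.restrict (Ioc (0:ℝ) 1)) univ = 0 := by rw [h0]; simp
      rw [Measure.restrict_apply_univ, Real.volume_Ioc] at h1
      simp at h1
    haveI : (ae (volume.restrict (Ioc (0:ℝ) 1))).NeBot := ae_neBot.2 hne
    obtain ⟨t, htg, htm⟩ := (hgeq.and (ae_restrict_mem measurableSet_Ioc)).exists
    exact absurd htg (sub_pos.2 (hcon t htm)).ne'
  obtain ⟨t, htIoc, hineq⟩ := hexists
  set s : (Fin n → ℝ) → ℝ := ({ω | t < c ω}).indicator (fun _ => (1:ℝ)) with hs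
  have hsS : MemS n s := by
    refine ⟨measurable_const.indicator (hset t), fun ω => ?_⟩
    by_cases hω : ω ∈ {ω | t < c ω} <;> simp [hs, hω]
  have hvs : vol1 n s = B t := by
    show (∫ ω, s ω ∂μ) = B t
    rw [hs, integral_indicator_const (1:ℝ) (hset t), smul_eq_mul, mul_one]; rfl
  have hsm : ∫ ω, s ω * m ω ∂μ = A t := by
    have heq : (fun ω => s ω * m ω) = ({ω | t < c ω}).indicator m := by
      funext ω; by_cases hω : ω ∈ {ω | t < c ω} <;> simp [hs, hω]
    rw [heq, integral_indicator (hset t)]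
  refine ⟨s, hsS, ?_⟩
  have hBK : 0 < B t + K := by have := hBnn t; linarith
  show 2 * (∫ ω, c ω * m ω ∂μ) / (vol1 n c + vol1 n m) ≤ _
  rw [Dice, hvs, hsm]
  have hvolc : vol1 n c = ∫ ω, c ω ∂μ := rfl
  rw [hvolc, ← hKdef, ← hD, hrD, div_le_div_iff₀ hDpos hBK]
  nlinarith [hDpos.le, hineq]

private lemma sInf_one_sub' (A : Set ℝ) (hne : A.Nonempty) (hbdd : BddAbove A) :
    sInf ((fun d => (1:ℝ) - d) '' A) = 1 - sSup A := by
  have hlub := isLUB_csSup hne hbdd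
  have hglb : IsGLB ((fun d => (1:ℝ) - d) '' A) (1 - sSup A) := by
    constructor
    · rintro x ⟨a, ha, rfl⟩
      have := hlub.1 ha
      simp only [Set.mem_setOf_eq]
      linarith
    · intro b hb
      have hub : (1 - b) ∈ upperBounds A := by
        intro a ha
        have := hb ⟨a, ha, rfl⟩
        simp only at this
        linarith
      have := hlub.2 hub
      linarith
  exact hglb.csInf_eq (hne.image _)

theorem soft_dice_inf_eq_one_sub_sup_dice
    (n : ℕ) (m : (Fin n → ℝ) → ℝ) (hm : MemM n m) (hpos : 0 < vol1 n m) :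
    sInf (SDvals n m) = 1 - sSup (Dvals n m) := by
  classical
  set Mv : Set ℝ := {x | ∃ c, MemM n c ∧ x = Dice n m c} with hMv
  have hprod_int : ∀ c : (Fin n → ℝ) → ℝ, MemM n c →
      Integrable (fun ω => c ω * m ω) (lam n) := by
    intro c hc
    refine (integrable_const (1:ℝ)).mono' (hc.1.mul hm.1).aestronglyMeasurable ?_
    filter_upwards with ω
    rw [Real.norm_eq_abs, abs_of_nonneg (mul_nonneg (hc.2 ω).1 (hm.2 ω).1)]
    exact mul_le_one₀ (hc.2 ω).2 (hm.2 ω).1 (hm.2 ω).2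
  have hnum_le : ∀ c : (Fin n → ℝ) → ℝ, MemM n c →
      (∫ ω, c ω * m ω ∂(lam n)) ≤ vol1 n m := by
    intro c hc
    exact integral_mono (hprod_int c hc) (memM_integrable' hm)
      (fun ω => mul_le_of_le_one_left (hm.2 ω).1 (hc.2 ω).2)
  have hdice_le : ∀ c : (Fin n → ℝ) → ℝ, MemM n c → Dice n m c ≤ 2 := by
    intro c hc
    have hvolc : 0 ≤ vol1 n c := integral_nonneg (fun ω => (hc.2 ω).1)
    have h2 : 2 * (∫ ω, c ω * m ω ∂(lam n)) ≤ 2 * vol1 n m := by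
      linarith [hnum_le c hc]
    calc Dice n m c ≤ 2 * vol1 n m / vol1 n m :=
          div_le_div₀ (by linarith) h2 hpos (by linarith)
      _ = 2 := by field_simp
  have hMne : Mv.Nonempty := ⟨Dice n m m, m, hm, rfl⟩
  have hDne : (Dvals n m).Nonempty :=
    ⟨Dice n m (fun _ => 0), fun _ => 0, ⟨measurable_const, fun _ => Or.inl rfl⟩, rfl⟩
  have hsub : Dvals n m ⊆ Mv := by
    rintro x ⟨s, hs, hx⟩
    exact ⟨s, memS_memM' hs, hx⟩
  have hMbdd : BddAbove Mv := by
    refine ⟨2, ?_⟩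
    rintro x ⟨c, hc, rfl⟩
    exact hdice_le c hc
  have hDbdd : BddAbove (Dvals n m) := hMbdd.mono hsub
  have hsupeq : sSup Mv = sSup (Dvals n m) := by
    apply le_antisymm
    · refine csSup_le hMne ?_
      rintro x ⟨c, hc, rfl⟩
      obtain ⟨s, hsS, hle⟩ := exists_threshold' hm hpos hc
      exact hle.trans (le_csSup hDbdd ⟨s, hsS, rfl⟩)
    · exact csSup_le_csSup hMbdd hDne hsub
  have himg : SDvals n m = (fun d => (1:ℝ) - d) '' Mv := by
    ext x
    constructor
    · rintro ⟨c, hc, rfl⟩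
      exact ⟨Dice n m c, ⟨c, hc, rfl⟩, by rw [softDice, Dice]⟩
    · rintro ⟨d, ⟨c, hc, rfl⟩, rfl⟩
      exact ⟨c, hc, by rw [softDice, Dice]⟩
  rw [himg, sInf_one_sub' Mv hMne hMbdd, hsupeq]
end
end

section
/- Let m : Ω → [0,1] be measurable with ‖m‖₁ > 0 and let D* = sup_{s∈S} D_m(s) be the optimal Dice value over binary segmentations. A function c ∈ M attains the infimum of the soft-Dice loss SD_m over M if and only if, λ-almost everywhere, c(ω) = 0 when m(ω) < D*/2 and c(ω) = 1 when m(ω) > D*/2 (c may take any value in [0,1] on the set where m(ω) = D*/2). -/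
open MeasureTheory Filter

noncomputable section

lemma lam_univ (n : ℕ) : lam n Set.univ = 1 := by
  rw [lam, Measure.restrict_apply_univ, cube, volume_pi_pi]
  simp [Real.volume_Icc]

instance inst_s1 (n : ℕ) : IsProbabilityMeasure (lam n) := ⟨lam_univ n⟩

lemma integrable_of_bdd {n : ℕ} {f : (Fin n → ℝ) → ℝ} (hf : Measurable f)
    (C : ℝ) (hC : ∀ ω, |f ω| ≤ C) : Integrable f (lam n) :=
  (integrable_const C).mono' hf.aestronglyMeasurable (ae_of_all _ (by simpa using hC))

variable {n : ℕ} {m c s : (Fin n → ℝ) → ℝ}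

lemma MemS.memM (hs : MemS n s) : MemM n s :=
  ⟨hs.1, fun ω => by rcases hs.2 ω with h | h <;> simp [h]⟩

lemma MemM.integrable (hm : MemM n m) : Integrable m (lam n) :=
  integrable_of_bdd hm.1 1 fun ω => abs_le.mpr ⟨by linarith [(hm.2 ω).1], (hm.2 ω).2⟩

lemma MemM.mul_integrable (hc : MemM n c) (hm : MemM n m) :
    Integrable (fun ω => c ω * m ω) (lam n) := by
  refine integrable_of_bdd (hc.1.mul hm.1) 1 fun ω => ?_
  rw [abs_mul]
  have h1 := hc.2 ω; have h2 := hm.2 ω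
  simp only [Set.mem_Icc] at h1 h2
  calc |c ω| * |m ω| ≤ 1 * 1 := by
        apply mul_le_mul <;> [skip; skip; positivity; norm_num] <;>
          rw [abs_le] <;> constructor <;> linarith [h1.1, h1.2, h2.1, h2.2]
    _ = 1 := by norm_num

lemma vol1_nonneg (hm : MemM n m) : 0 ≤ vol1 n m :=
  integral_nonneg fun ω => (hm.2 ω).1

/-- `ψ θ = ∫ (2m - θ)⁺`. -/
def psi (n : ℕ) (m : (Fin n → ℝ) → ℝ) (θ : ℝ) : ℝ :=
  ∫ ω, max (2 * m ω - θ) 0 ∂(lam n)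

lemma psi_integrable (hm : MemM n m) (θ : ℝ) :
    Integrable (fun ω => max (2 * m ω - θ) 0) (lam n) := by
  refine integrable_of_bdd ((hm.1.const_mul 2).sub measurable_const |>.max measurable_const)
    (2 + |θ|) fun ω => ?_
  have h := hm.2 ω; simp only [Set.mem_Icc] at h
  rw [abs_le]
  refine ⟨?_, max_le (by linarith [neg_abs_le θ, h.2]) (by positivity)⟩
  have h0 : (0:ℝ) ≤ max (2 * m ω - θ) 0 := le_max_right _ _
  have : (0:ℝ) ≤ 2 + |θ| := by positivity
  linarith

lemma expand_integral (hc : MemM n c) (hm : MemM n m) (θ : ℝ) :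
    ∫ ω, c ω * (2 * m ω - θ) ∂(lam n)
      = 2 * (∫ ω, c ω * m ω ∂(lam n)) - θ * vol1 n c := by
  have h : (fun ω => c ω * (2 * m ω - θ)) =
      fun ω => 2 * (c ω * m ω) - θ * c ω := by funext ω; ring
  rw [h, integral_sub ((hc.mul_integrable hm).const_mul 2) (hc.integrable.const_mul θ),
    integral_const_mul, integral_const_mul, vol1]

lemma mul_lin_integrable (hc : MemM n c) (hm : MemM n m) (θ : ℝ) :
    Integrable (fun ω => c ω * (2 * m ω - θ)) (lam n) := by
  refine integrable_of_bdd (hc.1.mul ((hm.1.const_mul 2).sub measurable_const)) (2 + |θ|)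
      fun ω => ?_
  have h1 := hc.2 ω; have h2 := hm.2 ω
  simp only [Set.mem_Icc] at h1 h2
  rw [abs_mul]
  calc |c ω| * |2 * m ω - θ| ≤ 1 * (2 + |θ|) := by
        apply mul_le_mul
        · rw [abs_le]; constructor <;> linarith [h1.1, h1.2]
        · rw [abs_le]
          constructor
          · linarith [le_abs_self θ, h2.1]
          · linarith [neg_abs_le θ, h2.2]
        · positivity
        · norm_num
    _ = 2 + |θ| := by norm_num

lemma memM_le_psi (hc : MemM n c) (hm : MemM n m) (θ : ℝ) :
    ∫ ω, c ω * (2 * m ω - θ) ∂(lam n) ≤ psi n m θ := by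
  refine integral_mono (mul_lin_integrable hc hm θ) (psi_integrable hm θ) fun ω => ?_
  · have h1 := hc.2 ω; simp only [Set.mem_Icc] at h1
    rcases le_or_gt (2 * m ω - θ) 0 with h | h
    · have : c ω * (2 * m ω - θ) ≤ 0 := mul_nonpos_of_nonneg_of_nonpos h1.1 h
      exact this.trans (le_max_right _ _)
    · calc c ω * (2 * m ω - θ) ≤ 1 * (2 * m ω - θ) := by nlinarith
        _ = 2 * m ω - θ := one_mul _
        _ ≤ _ := le_max_left _ _

lemma indicator_eq_psi (hm : MemM n m) (θ : ℝ) :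
    ∫ ω, (if θ < 2 * m ω then (1:ℝ) else 0) * (2 * m ω - θ) ∂(lam n) = psi n m θ := by
  rw [psi]
  congr 1; funext ω
  rcases lt_or_ge θ (2 * m ω) with h | h
  · rw [if_pos h, one_mul, max_eq_left (by linarith)]
  · rw [if_neg (not_lt.mpr h), zero_mul, max_eq_right (by linarith)]

lemma psi_lip (hm : MemM n m) {θ₁ θ₂ : ℝ} (h : θ₁ ≤ θ₂) :
    psi n m θ₁ ≤ psi n m θ₂ + (θ₂ - θ₁) := by
  have key : psi n m θ₁ ≤ ∫ ω, (max (2 * m ω - θ₂) 0 + (θ₂ - θ₁)) ∂(lam n) := by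
    refine integral_mono (psi_integrable hm θ₁) ((psi_integrable hm θ₂).add (integrable_const _))
      fun ω => max_le (by linarith [le_max_left (2 * m ω - θ₂) 0])
        (by linarith [le_max_right (2 * m ω - θ₂) 0])
  rwa [integral_add (psi_integrable hm θ₂) (integrable_const _), integral_const,
    probReal_univ, smul_eq_mul, one_mul] at key

theorem soft_dice_minimizer_characterization
    (n : ℕ) (m : (Fin n → ℝ) → ℝ) (hm : MemM n m) (hpos : 0 < vol1 n m)
    (Dstar : ℝ) (hD : Dstar = sSup (Dvals n m))
    (c : (Fin n → ℝ) → ℝ) (hc : MemM n c) :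
    softDice n m c = sInf (SDvals n m) ↔
      (∀ᵐ ω ∂(lam n),
        (m ω < Dstar / 2 → c ω = 0) ∧ (Dstar / 2 < m ω → c ω = 1)) := by
  subst hD
  set V := vol1 n m with hV
  have hzero : (0:ℝ) ∈ Dvals n m :=
    ⟨fun _ => 0, ⟨measurable_const, fun _ => Or.inl rfl⟩, by simp [Dice]⟩
  have hne : (Dvals n m).Nonempty := ⟨0, hzero⟩
  have hVnn : (0:ℝ) ≤ V := le_of_lt hpos
  have hbdd : BddAbove (Dvals n m) := by
    refine ⟨2, fun x hx => ?_⟩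
    obtain ⟨s, hs, rfl⟩ := hx
    have hT : 0 ≤ vol1 n s := vol1_nonneg hs.memM
    have hI : (∫ ω, s ω * m ω ∂(lam n)) ≤ V := by
      refine integral_mono (hs.memM.mul_integrable hm) hm.integrable fun ω => ?_
      have h1 := hs.memM.2 ω; have h2 := hm.2 ω
      simp only [Set.mem_Icc] at h1 h2
      nlinarith [h1.1, h1.2, h2.1, h2.2]
    rw [Dice, div_le_iff₀ (by linarith)]
    linarith
  set D := sSup (Dvals n m) with hDdef
  have hD0 : 0 ≤ D := le_csSup hbdd hzero
  -- the thresholded indicator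
  set t : (Fin n → ℝ) → ℝ := fun ω => if D < 2 * m ω then (1:ℝ) else 0 with ht
  have hts : MemS n t :=
    ⟨Measurable.ite (measurableSet_lt measurable_const (hm.1.const_mul 2))
        measurable_const measurable_const,
      fun ω => by by_cases h : D < 2 * m ω <;> simp [ht, h]⟩
  have htM : MemM n t := hts.memM
  have hTt : 0 ≤ vol1 n t := vol1_nonneg htM
  have hdent : 0 < vol1 n t + V := by linarith
  have hpsit : psi n m D = 2 * (∫ ω, t ω * m ω ∂(lam n)) - D * vol1 n t := by
    rw [← expand_integral htM hm D, ← indicator_eq_psi hm D]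
  -- step (a): psi D ≤ D * V
  have hDice_t_le : Dice n m t ≤ D := le_csSup hbdd ⟨t, hts, rfl⟩
  have ha : psi n m D ≤ D * V := by
    rw [Dice, div_le_iff₀ hdent] at hDice_t_le
    have : D * (vol1 n t + V) = D * vol1 n t + D * V := by ring
    rw [hpsit]; linarith
  -- step (b): D * V ≤ psi D
  have hb : D * V ≤ psi n m D := by
    refine le_of_forall_pos_le_add fun ε hε => ?_
    have hδpos : 0 < ε / (V + 1) := div_pos hε (by linarith)
    obtain ⟨x, hx, hxgt⟩ := exists_lt_of_lt_csSup hne (show D - ε / (V + 1) < D by linarith)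
    have hxle : x ≤ D := le_csSup hbdd hx
    obtain ⟨s, hs, rfl⟩ := hx
    set d := Dice n m s with hd
    have hT : 0 ≤ vol1 n s := vol1_nonneg hs.memM
    have hden : 0 < vol1 n s + V := by linarith
    have h2I : 2 * (∫ ω, s ω * m ω ∂(lam n)) = d * (vol1 n s + V) := by
      rw [hd, Dice]; exact (div_mul_cancel₀ _ hden.ne').symm
    have hint : (∫ ω, s ω * (2 * m ω - d) ∂(lam n)) = d * V := by
      rw [expand_integral hs.memM hm d, h2I]; ring
    have h1 : d * V ≤ psi n m d := hint ▸ memM_le_psi hs.memM hm d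
    have h2 : psi n m d ≤ psi n m D + (D - d) := psi_lip hm hxle
    have h3 : D - d < ε / (V + 1) := by linarith
    have h4 : ε / (V + 1) * (V + 1) = ε := div_mul_cancel₀ _ (by linarith)
    nlinarith [mul_lt_mul_of_pos_right h3 (show (0:ℝ) < V + 1 by linarith)]
  have hkey : psi n m D = D * V := le_antisymm ha hb
  -- every c' in M satisfies 2∫c'm ≤ D(∫c' + V)
  have key_le : ∀ c', MemM n c' →
      2 * (∫ ω, c' ω * m ω ∂(lam n)) ≤ D * (vol1 n c' + V) := by
    intro c' hc'
    have h := memM_le_psi hc' hm D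
    rw [expand_integral hc' hm D, hkey] at h
    have : D * (vol1 n c' + V) = D * vol1 n c' + D * V := by ring
    linarith
  have memSD_ge : ∀ x ∈ SDvals n m, 1 - D ≤ x := by
    rintro x ⟨c', hc', rfl⟩
    have hT' : 0 ≤ vol1 n c' := vol1_nonneg hc'
    have hden : 0 < vol1 n c' + V := by linarith
    have hq : 2 * (∫ ω, c' ω * m ω ∂(lam n)) / (vol1 n c' + V) ≤ D := by
      rw [div_le_iff₀ hden]; exact key_le c' hc'
    rw [softDice]; linarith
  have hsdt : softDice n m t = 1 - D := by
    have h2It : 2 * (∫ ω, t ω * m ω ∂(lam n)) = D * (vol1 n t + V) := by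
      have : D * (vol1 n t + V) = D * vol1 n t + D * V := by ring
      rw [hkey] at hpsit; linarith
    rw [softDice, h2It, mul_div_assoc, div_self hdent.ne', mul_one]
  have hmemSD : (1 - D) ∈ SDvals n m := ⟨t, htM, hsdt.symm⟩
  have hInf : sInf (SDvals n m) = 1 - D :=
    le_antisymm (csInf_le ⟨1 - D, fun x hx => memSD_ge x hx⟩ hmemSD)
      (le_csInf ⟨_, hmemSD⟩ memSD_ge)
  -- the nonnegative gap function
  set g : (Fin n → ℝ) → ℝ := fun ω => max (2 * m ω - D) 0 - c ω * (2 * m ω - D) with hg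
  have hg_nonneg : ∀ ω, 0 ≤ g ω := by
    intro ω
    have h1 := hc.2 ω; simp only [Set.mem_Icc] at h1
    simp only [hg]
    rcases le_or_gt (2 * m ω - D) 0 with h | h
    · rw [max_eq_right h]
      nlinarith
    · rw [max_eq_left h.le]
      nlinarith
  have hg_int : Integrable g (lam n) :=
    (psi_integrable hm D).sub (mul_lin_integrable hc hm D)
  have hTc : 0 ≤ vol1 n c := vol1_nonneg hc
  have hdenc : 0 < vol1 n c + V := by linarith
  have hg_integral : (∫ ω, g ω ∂(lam n))
      = D * (vol1 n c + V) - 2 * (∫ ω, c ω * m ω ∂(lam n)) := by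
    rw [hg, integral_sub (psi_integrable hm D) (mul_lin_integrable hc hm D),
      expand_integral hc hm D]
    have : (∫ ω, max (2 * m ω - D) 0 ∂(lam n)) = psi n m D := rfl
    rw [this, hkey]; ring
  have hIff1 : softDice n m c = 1 - D ↔
      2 * (∫ ω, c ω * m ω ∂(lam n)) = D * (vol1 n c + V) := by
    rw [softDice, sub_right_inj, div_eq_iff hdenc.ne']
  have hIff2 : 2 * (∫ ω, c ω * m ω ∂(lam n)) = D * (vol1 n c + V) ↔
      (∫ ω, g ω ∂(lam n)) = 0 := by
    rw [hg_integral]; constructor <;> intro h <;> linarith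
  have hIff3 : (∫ ω, g ω ∂(lam n)) = 0 ↔ g =ᵐ[lam n] 0 :=
    integral_eq_zero_iff_of_nonneg hg_nonneg hg_int
  have hptwise : ∀ ω, g ω = 0 ↔
      ((m ω < D / 2 → c ω = 0) ∧ (D / 2 < m ω → c ω = 1)) := by
    intro ω
    have h1 := hc.2 ω; simp only [Set.mem_Icc] at h1
    simp only [hg]
    constructor
    · intro h0
      constructor
      · intro hlt
        have hneg : 2 * m ω - D < 0 := by linarith
        rw [max_eq_right hneg.le] at h0
        have : c ω * (2 * m ω - D) = 0 := by linarith
        rcases mul_eq_zero.mp this with h | h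
        · exact h
        · exact absurd h hneg.ne
      · intro hgt
        have hposd : 0 < 2 * m ω - D := by linarith
        rw [max_eq_left hposd.le] at h0
        have : (1 - c ω) * (2 * m ω - D) = 0 := by linarith
        rcases mul_eq_zero.mp this with h | h
        · linarith
        · exact absurd h hposd.ne'
    · rintro ⟨hA, hB⟩
      rcases lt_trichotomy (m ω) (D / 2) with hlt | heq | hgt
      · rw [hA hlt, max_eq_right (by linarith), zero_mul, sub_zero]
      · have : 2 * m ω - D = 0 := by linarith
        simp [this]
      · rw [hB hgt, max_eq_left (by linarith), one_mul, sub_self]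
  rw [hInf, hIff1, hIff2, hIff3]
  constructor <;> intro h <;> filter_upwards [h] with ω h0
  · exact (hptwise ω).1 h0
  · exact (hptwise ω).2 h0
end
end

section
/- Let m : Ω → [0,1] be measurable with ‖m‖₁ > 0 and D* = sup_{s∈S} D_m(s). A binary function s ∈ S attains the supremum of D_m over S if and only if, λ-almost everywhere, s(ω) = 0 when m(ω) < D*/2 and s(ω) = 1 when m(ω) > D*/2. -/
open MeasureTheory Filter

noncomputable section

namespace DiceAux

lemma lam_univ (n : ℕ) : lam n Set.univ = 1 := by
  rw [lam, Measure.restrict_apply MeasurableSet.univ, Set.univ_inter, cube,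
    MeasureTheory.volume_pi_pi]
  simp [Real.volume_Icc]

instance (n : ℕ) : IsProbabilityMeasure (lam n) := ⟨lam_univ n⟩

lemma integrable_bdd {n : ℕ} {f : (Fin n → ℝ) → ℝ} (hf : Measurable f) {C : ℝ}
    (h : ∀ ω, |f ω| ≤ C) : Integrable f (lam n) :=
  ⟨hf.aestronglyMeasurable,
    HasFiniteIntegral.of_bounded (C := C) (ae_of_all _ fun ω => by simpa using h ω)⟩

variable {n : ℕ} {m s : (Fin n → ℝ) → ℝ}

lemma memS_nonneg (hs : MemS n s) (ω : Fin n → ℝ) : 0 ≤ s ω := by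
  rcases hs.2 ω with h | h <;> rw [h] <;> norm_num

lemma memS_le_one (hs : MemS n s) (ω : Fin n → ℝ) : s ω ≤ 1 := by
  rcases hs.2 ω with h | h <;> rw [h] <;> norm_num

lemma memM_integrable (hm : MemM n m) : Integrable m (lam n) :=
  integrable_bdd hm.1 (C := 1) fun ω => abs_le.2 ⟨by linarith [(hm.2 ω).1], (hm.2 ω).2⟩

lemma memS_integrable (hs : MemS n s) : Integrable s (lam n) :=
  integrable_bdd hs.1 (C := 1) fun ω => abs_le.2 ⟨by linarith [memS_nonneg hs ω], memS_le_one hs ω⟩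

lemma memS_mul_integrable (hs : MemS n s) (hm : MemM n m) :
    Integrable (fun ω => s ω * m ω) (lam n) := by
  refine integrable_bdd (hs.1.mul hm.1) (C := 1) fun ω => abs_le.2 ⟨?_, ?_⟩
  · nlinarith [memS_nonneg hs ω, (hm.2 ω).1]
  · nlinarith [memS_nonneg hs ω, memS_le_one hs ω, (hm.2 ω).1, (hm.2 ω).2]

lemma vol1_s_nonneg (hs : MemS n s) : 0 ≤ vol1 n s :=
  integral_nonneg (memS_nonneg hs)

lemma vol1_s_le_one (hs : MemS n s) : vol1 n s ≤ 1 := by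
  have h := integral_mono (μ := lam n) (memS_integrable hs) (integrable_const 1)
    (memS_le_one hs)
  simpa [vol1] using h

lemma integral_mul_le (hs : MemS n s) (hm : MemM n m) :
    (∫ ω, s ω * m ω ∂(lam n)) ≤ vol1 n m := by
  refine integral_mono (memS_mul_integrable hs hm) (memM_integrable hm) fun ω => ?_
  nlinarith [memS_nonneg hs ω, memS_le_one hs ω, (hm.2 ω).1]

lemma key_lin (hs : MemS n s) (hm : MemM n m) (c : ℝ) :
    (∫ ω, s ω * (2 * m ω - c) ∂(lam n)) =
      2 * (∫ ω, s ω * m ω ∂(lam n)) - c * vol1 n s := by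
  have h : (fun ω => s ω * (2 * m ω - c)) =
      fun ω => 2 * (s ω * m ω) - c * s ω := by funext ω; ring
  rw [h, integral_sub ((memS_mul_integrable hs hm).const_mul 2)
    ((memS_integrable hs).const_mul c), integral_const_mul, integral_const_mul]
  rfl

lemma P_integrable (hm : MemM n m) (c : ℝ) :
    Integrable (fun ω => max (2 * m ω - c) 0) (lam n) := by
  refine integrable_bdd (((hm.1.const_mul 2).sub_const c).max measurable_const)
    (C := 2 + |c|) fun ω => abs_le.2 ⟨?_, max_le ?_ ?_⟩
  · have := le_max_right (2 * m ω - c) 0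
    have := abs_nonneg c
    linarith
  · have h1 := (hm.2 ω).2
    have h2 := neg_abs_le c
    linarith
  · have := abs_nonneg c; linarith

lemma key_le (hs : MemS n s) (hm : MemM n m) (c : ℝ) :
    (∫ ω, s ω * (2 * m ω - c) ∂(lam n)) ≤ ∫ ω, max (2 * m ω - c) 0 ∂(lam n) := by
  refine integral_mono ?_ (P_integrable hm c) fun ω => ?_
  · have h : (fun ω => s ω * (2 * m ω - c)) =
        fun ω => 2 * (s ω * m ω) - c * s ω := by funext ω; ring
    rw [h]
    exact ((memS_mul_integrable hs hm).const_mul 2).sub ((memS_integrable hs).const_mul c)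
  · rcases hs.2 ω with h | h <;> rw [h]
    · simpa using le_max_right (2 * m ω - c) 0
    · simpa using le_max_left (2 * m ω - c) 0

lemma den_pos (hs : MemS n s) (hpos : 0 < vol1 n m) : 0 < vol1 n s + vol1 n m := by
  linarith [vol1_s_nonneg hs]

lemma dice_le_iff (hs : MemS n s) (hpos : 0 < vol1 n m) (t : ℝ) :
    Dice n m s ≤ t ↔ 2 * (∫ ω, s ω * m ω ∂(lam n)) ≤ t * (vol1 n s + vol1 n m) := by
  rw [Dice, div_le_iff₀ (den_pos hs hpos)]

lemma dice_eq_iff (hs : MemS n s) (hpos : 0 < vol1 n m) (t : ℝ) :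
    Dice n m s = t ↔ 2 * (∫ ω, s ω * m ω ∂(lam n)) = t * (vol1 n s + vol1 n m) := by
  rw [Dice, div_eq_iff (ne_of_gt (den_pos hs hpos))]

end DiceAux

open DiceAux in
theorem dice_maximizer_characterization
    (n : ℕ) (m : (Fin n → ℝ) → ℝ) (hm : MemM n m) (hpos : 0 < vol1 n m)
    (Dstar : ℝ) (hD : Dstar = sSup (Dvals n m))
    (s : (Fin n → ℝ) → ℝ) (hs : MemS n s) :
    Dice n m s = sSup (Dvals n m) ↔
      (∀ᵐ ω ∂(lam n),
        (m ω < Dstar / 2 → s ω = 0) ∧ (Dstar / 2 < m ω → s ω = 1)) := by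
  subst hD
  set D := sSup (Dvals n m) with hDdef
  have int_m := memM_integrable hm
  have int_s := memS_integrable hs
  have int_sm := memS_mul_integrable hs hm
  have hne : (Dvals n m).Nonempty :=
    ⟨Dice n m (fun _ => 0), fun _ => 0, ⟨measurable_const, fun _ => Or.inl rfl⟩, rfl⟩
  have hbdd : BddAbove (Dvals n m) := by
    refine ⟨2, ?_⟩
    rintro x ⟨s', hs', rfl⟩
    rw [dice_le_iff hs' hpos, mul_add]
    have h1 := integral_mul_le hs' hm
    have h2 := vol1_s_nonneg hs'
    linarith
  have hub : ∀ x ∈ Dvals n m, x ≤ D := fun x hx => le_csSup hbdd hx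
  set P := fun ω => max (2 * m ω - D) 0 with hP
  set A := ∫ ω, P ω ∂(lam n) with hA
  have intP : Integrable P (lam n) := P_integrable hm D
  -- Step 2 : A ≤ D * vol1 n m
  have step2 : A ≤ D * vol1 n m := by
    set s₀ : (Fin n → ℝ) → ℝ := fun ω => if D < 2 * m ω then 1 else 0 with hs₀
    have hs₀S : MemS n s₀ := by
      constructor
      · exact Measurable.ite (measurableSet_lt measurable_const (hm.1.const_mul 2))
          measurable_const measurable_const
      · intro ω; by_cases h : D < 2 * m ω <;> simp [hs₀, h]
    have hdice := hub (Dice n m s₀) ⟨s₀, hs₀S, rfl⟩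
    rw [dice_le_iff hs₀S hpos, mul_add] at hdice
    have hlin := key_lin hs₀S hm D
    have heq : (∫ ω, s₀ ω * (2 * m ω - D) ∂(lam n)) = A := by
      rw [hA]
      congr 1
      funext ω
      by_cases h : D < 2 * m ω
      · simp only [hs₀, if_pos h, one_mul, hP]
        rw [max_eq_left (by linarith)]
      · simp only [hs₀, if_neg h, zero_mul, hP]
        rw [max_eq_right (by linarith [not_lt.1 h])]
    linarith [heq ▸ hlin]
  -- Step 3 : D * vol1 n m ≤ A
  have step3 : D * vol1 n m ≤ A := by
    by_contra hcon
    push_neg at hcon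
    set ε := D * vol1 n m - A with hε
    have hεpos : 0 < ε := by linarith
    have hV1 : (0:ℝ) < 1 + vol1 n m := by linarith
    have hub' : ∀ x ∈ Dvals n m, x ≤ D - ε / (1 + vol1 n m) := by
      rintro x ⟨s', hs', rfl⟩
      rw [dice_le_iff hs' hpos]
      have h1 := key_le hs' hm D
      have h2 := key_lin hs' hm D
      have h3 := vol1_s_le_one hs'
      have h4 := vol1_s_nonneg hs'
      have h5 : ε * (vol1 n s' + vol1 n m) / (1 + vol1 n m) ≤ ε := by
        rw [div_le_iff₀ hV1]; nlinarith
      have expand : (D - ε / (1 + vol1 n m)) * (vol1 n s' + vol1 n m)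
          = D * vol1 n s' + D * vol1 n m
            - ε * (vol1 n s' + vol1 n m) / (1 + vol1 n m) := by
        field_simp
      rw [expand]
      rw [← hA] at h1
      linarith
    have hle : D ≤ D - ε / (1 + vol1 n m) := csSup_le hne hub'
    have : 0 < ε / (1 + vol1 n m) := div_pos hεpos hV1
    linarith
  have hAeq : A = D * vol1 n m := le_antisymm step2 step3
  -- integrability of the relevant functions
  have int1 : Integrable (fun ω => s ω * (2 * m ω - D)) (lam n) := by
    have heq : (fun ω => s ω * (2 * m ω - D))
        = fun ω => 2 * (s ω * m ω) - D * s ω := by funext ω; ring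
    rw [heq]
    exact (int_sm.const_mul 2).sub (int_s.const_mul D)
  have inth : Integrable (fun ω => P ω - s ω * (2 * m ω - D)) (lam n) := intP.sub int1
  have hnn : 0 ≤ᶠ[MeasureTheory.ae (lam n)] fun ω => P ω - s ω * (2 * m ω - D) := by
    refine Filter.Eventually.of_forall fun ω => ?_
    have hPω : P ω = max (2 * m ω - D) 0 := rfl
    have hp0 := le_max_right (2 * m ω - D) (0:ℝ)
    have hp1 := le_max_left (2 * m ω - D) (0:ℝ)
    rcases hs.2 ω with h0 | h1
    · simp only [Pi.zero_apply, h0, zero_mul, sub_zero, hPω]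
      linarith
    · simp only [Pi.zero_apply, h1, one_mul, hPω]
      linarith
  -- Dice = D ↔ integral of nonneg function is zero
  have key : Dice n m s = D ↔ (∫ ω, (P ω - s ω * (2 * m ω - D)) ∂(lam n)) = 0 := by
    rw [dice_eq_iff hs hpos, integral_sub intP int1, key_lin hs hm D, ← hA, mul_add]
    constructor <;> intro hx <;> linarith
  -- pointwise characterization
  have pt : ∀ ω, (P ω - s ω * (2 * m ω - D) = 0) ↔
      ((m ω < D / 2 → s ω = 0) ∧ (D / 2 < m ω → s ω = 1)) := by
    intro ω
    rcases hs.2 ω with h0 | h1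
    · rw [h0]
      simp only [hP, zero_mul, sub_zero]
      constructor
      · intro hx
        refine ⟨fun _ => by simp, fun hlt => absurd hx ?_⟩
        have hgt : 0 < 2 * m ω - D := by linarith
        rw [max_eq_left hgt.le]
        exact ne_of_gt hgt
      · rintro ⟨-, h2⟩
        have hle : 2 * m ω - D ≤ 0 := by
          by_contra hc
          push_neg at hc
          have h3 := h2 (by linarith)
          norm_num at h3
        exact max_eq_right hle
    · rw [h1]
      simp only [hP, one_mul]
      constructor
      · intro hx
        have hmax : max (2 * m ω - D) 0 = 2 * m ω - D := sub_eq_zero.1 hx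
        have hge : 0 ≤ 2 * m ω - D := by
          rw [← hmax]; exact le_max_right _ _
        exact ⟨fun hlt => (by linarith : False).elim, fun _ => by simp⟩
      · rintro ⟨h2, -⟩
        have hge : 0 ≤ 2 * m ω - D := by
          by_contra hc
          push_neg at hc
          have h3 := h2 (by linarith)
          norm_num at h3
        rw [max_eq_left hge]
        ring
  rw [key, integral_eq_zero_iff_of_nonneg_ae hnn inth]
  exact eventually_congr (Filter.Eventually.of_forall fun ω => by
    simpa using pt ω)
end
end

section
/- For every v ∈ (0,1] there exists a measurable m₀ : Ω → [0,1] with ‖m₀‖₁ = v such that some minimizer c of the soft-Dice loss SD_{m₀} over M has ‖c‖₁ = v² = ‖m₀‖₁². (The lower bound ‖m‖₁² on the volume of soft-Dice minimizers is sharp.) -/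
open MeasureTheory Filter

noncomputable section

lemma cube_vol (n : ℕ) : volume (cube n) = 1 := by
  rw [cube, volume_pi_pi]; simp [Real.volume_Icc]

instance lam_prob (n : ℕ) : IsProbabilityMeasure (lam n) :=
  ⟨by rw [lam, Measure.restrict_apply MeasurableSet.univ, Set.univ_inter, cube_vol]⟩

lemma slice_vol (n : ℕ) (hn : 1 ≤ n) (r : ℝ) (hr : r ∈ Set.Icc (0:ℝ) 1) :
    lam n ((fun ω => ω ⟨0, hn⟩) ⁻¹' Set.Iic r) = ENNReal.ofReal r := by
  set i0 : Fin n := ⟨0, hn⟩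
  have hA : ((fun ω : Fin n → ℝ => ω i0) ⁻¹' Set.Iic r) ∩ cube n
      = Set.univ.pi (fun i => if i = i0 then Set.Icc (0:ℝ) r else Set.Icc 0 1) := by
    ext ω
    simp only [Set.mem_inter_iff, Set.mem_preimage, Set.mem_Iic, cube, Set.mem_pi,
      Set.mem_univ, true_implies, Set.mem_Icc]
    constructor
    · rintro ⟨h1, h2⟩ i
      by_cases hi : i = i0
      · simp only [if_pos hi, Set.mem_Icc]
        exact ⟨(h2 i).1, by rw [hi]; exact h1⟩
      · simpa [hi] using h2 i
    · intro h
      refine ⟨?_, fun i => ?_⟩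
      · have := h i0; simp only [if_pos rfl, Set.mem_Icc] at this; exact this.2
      · have := h i
        by_cases hi : i = i0
        · subst hi; simp only [if_pos rfl, Set.mem_Icc] at this
          exact ⟨this.1, this.2.trans hr.2⟩
        · simpa [hi] using this
  rw [lam, Measure.restrict_apply (by measurability), hA, volume_pi_pi]
  have : ∀ i : Fin n, volume (if i = i0 then Set.Icc (0:ℝ) r else Set.Icc 0 1)
      = if i = i0 then ENNReal.ofReal r else 1 := by
    intro i; by_cases hi : i = i0 <;> simp [hi, Real.volume_Icc]
  simp only [this]
  simp

theorem soft_dice_volume_lower_bound_sharp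
    (n : ℕ) (hn : 1 ≤ n) (v : ℝ) (hv : v ∈ Set.Ioc (0:ℝ) 1) :
    ∃ m₀ : (Fin n → ℝ) → ℝ, MemM n m₀ ∧ vol1 n m₀ = v ∧
      ∃ c : (Fin n → ℝ) → ℝ, MemM n c ∧
        softDice n m₀ c = sInf (SDvals n m₀) ∧ vol1 n c = v ^ 2 := by
  obtain ⟨hv0, hv1⟩ := hv
  have hv0' : (0:ℝ) < 1 + v := by linarith
  set i0 : Fin n := ⟨0, hn⟩ with hi0
  set A : Set (Fin n → ℝ) := (fun ω => ω i0) ⁻¹' Set.Iic (v^2) with hAdef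
  have hA : MeasurableSet A := (measurable_pi_apply i0) measurableSet_Iic
  have hv2 : v^2 ∈ Set.Icc (0:ℝ) 1 :=
    ⟨sq_nonneg v, by nlinarith⟩
  have hlamA : lam n A = ENNReal.ofReal (v^2) := slice_vol n hn _ hv2
  set b : ℝ := v / (1 + v) with hbdef
  have hb0 : 0 ≤ b := div_nonneg hv0.le hv0'.le
  have hb1 : b ≤ 1 := by rw [div_le_one hv0']; linarith
  set c : (Fin n → ℝ) → ℝ := A.indicator (fun _ => 1) with hcdef
  set m₀ : (Fin n → ℝ) → ℝ := fun ω => b + (1 - b) * c ω with hmdef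
  have hcMeas : Measurable c := measurable_const.indicator hA
  have hc01 : ∀ ω, c ω ∈ Set.Icc (0:ℝ) 1 := by
    intro ω; by_cases h : ω ∈ A <;> simp [hcdef, Set.indicator_apply, h]
  have hcInt : Integrable c (lam n) := (integrable_const 1).indicator hA
  have vol1c : vol1 n c = v ^ 2 := by
    rw [vol1, hcdef]
    rw [show (fun _ : Fin n → ℝ => (1:ℝ)) = (1 : (Fin n → ℝ) → ℝ) from rfl]
    rw [MeasureTheory.integral_indicator_one hA, measureReal_def, hlamA,
      ENNReal.toReal_ofReal (sq_nonneg v)]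
  have hmMeas : Measurable m₀ := by
    apply Measurable.add measurable_const (hcMeas.const_mul _)
  have hm01 : ∀ ω, m₀ ω ∈ Set.Icc (0:ℝ) 1 := by
    intro ω
    rcases hc01 ω with ⟨h1, h2⟩
    simp only [hmdef, Set.mem_Icc]
    constructor <;> nlinarith
  have hmInt : Integrable m₀ (lam n) :=
    (integrable_const b).add (hcInt.const_mul _)
  have vol1m : vol1 n m₀ = v := by
    rw [vol1, hmdef]
    rw [integral_add (integrable_const b) (hcInt.const_mul _)]
    rw [integral_const, integral_const_mul _ _]
    have : ∫ ω, c ω ∂(lam n) = v ^ 2 := vol1c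
    rw [this]
    simp [measure_univ]
    rw [hbdef]; field_simp; ring
  -- c*m₀ = c pointwise
  have hcm : ∀ ω, c ω * m₀ ω = c ω := by
    intro ω
    by_cases h : ω ∈ A <;> simp [hmdef, hcdef, Set.indicator_apply, h]
  have hInt_cm : (∫ ω, c ω * m₀ ω ∂(lam n)) = v ^ 2 := by
    simp only [hcm]; exact vol1c
  set L : ℝ := 1 - 2 * v ^ 2 / (v ^ 2 + v) with hLdef
  have hSDc : softDice n m₀ c = L := by
    rw [softDice, hInt_cm, vol1c, vol1m]
  -- lower bound
  have hlb : ∀ x ∈ SDvals n m₀, L ≤ x := by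
    rintro x ⟨c', ⟨hc'M, hc'01⟩, rfl⟩
    have hc'Int : Integrable c' (lam n) := by
      apply (integrable_const (1:ℝ)).mono' hc'M.aestronglyMeasurable
      filter_upwards with ω
      rw [Real.norm_eq_abs, abs_of_nonneg (hc'01 ω).1]; exact (hc'01 ω).2
    set T : ℝ := vol1 n c' with hTdef
    have hT0 : 0 ≤ T := integral_nonneg fun ω => (hc'01 ω).1
    have hccInt : Integrable (fun ω => c' ω * c ω) (lam n) := by
      apply (integrable_const (1:ℝ)).mono' (hc'M.mul hcMeas).aestronglyMeasurable
      filter_upwards with ω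
      rw [Real.norm_eq_abs, Pi.mul_apply, abs_of_nonneg (mul_nonneg (hc'01 ω).1 (hc01 ω).1)]
      exact mul_le_one₀ (hc'01 ω).2 (hc01 ω).1 (hc01 ω).2
    have hJ : (∫ ω, c' ω * c ω ∂(lam n)) ≤ v ^ 2 := by
      rw [← vol1c, vol1]
      apply integral_mono hccInt hcInt
      intro ω
      exact mul_le_of_le_one_left (hc01 ω).1 (hc'01 ω).2
    have hI : (∫ ω, c' ω * m₀ ω ∂(lam n))
        = b * T + (1 - b) * ∫ ω, c' ω * c ω ∂(lam n) := by
      have : ∀ ω, c' ω * m₀ ω = b * c' ω + (1 - b) * (c' ω * c ω) := by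
        intro ω; rw [hmdef]; ring
      simp only [this]
      rw [integral_add (hc'Int.const_mul _) (hccInt.const_mul _),
        integral_const_mul _ _, integral_const_mul _ _, hTdef, vol1]
    set I : ℝ := ∫ ω, c' ω * m₀ ω ∂(lam n) with hIdef
    have hkey : I * (1 + v) ≤ v * (T + v) := by
      rw [hI]
      have hb1v : b * (1 + v) = v := by rw [hbdef]; field_simp
      have hb2v : (1 - b) * (1 + v) = 1 := by rw [hbdef]; field_simp; ring
      nlinarith [hJ, hT0]
    rw [softDice, vol1m, ← hIdef, hLdef]
    have hden : (0:ℝ) < T + v := by linarith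
    have hL2 : 2 * v ^ 2 / (v ^ 2 + v) = 2 * v / (1 + v) := by
      rw [show v ^ 2 + v = v * (1 + v) by ring]
      rw [show (2:ℝ) * v ^ 2 = v * (2 * v) by ring]
      rw [mul_div_mul_left _ _ (ne_of_gt hv0)]
    rw [hL2]
    have : 2 * I / (T + v) ≤ 2 * v / (1 + v) := by
      rw [div_le_div_iff₀ hden hv0']
      nlinarith [hkey]
    linarith
  have hmem : L ∈ SDvals n m₀ := ⟨c, ⟨hcMeas, hc01⟩, hSDc.symm⟩
  refine ⟨m₀, ⟨hmMeas, hm01⟩, vol1m, c, ⟨hcMeas, hc01⟩, ?_, vol1c⟩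
  rw [hSDc]
  exact le_antisymm (le_csInf ⟨L, hmem⟩ (fun x hx => hlb x hx))
    (csInf_le ⟨L, hlb⟩ hmem)
end
end

section
/- Let m ∈ M with ‖m‖₁ > 0. For every maximizer s of the Dice score D_m over binary segmentations S, the volume of s is at least the volume of the 1/2-thresholded marginal: ‖s‖₁ ≥ ‖I_{[1/2,1]}∘m‖₁ = λ({ω : m(ω) ≥ 1/2}). -/
open MeasureTheory Filter

noncomputable section

instance (n : ℕ) : IsFiniteMeasure (lam n) :=
  ⟨by rw [lam_univ]; exact ENNReal.one_lt_top⟩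

lemma integrable01 {n : ℕ} {f : (Fin n → ℝ) → ℝ} (hf : Measurable f)
    (h0 : ∀ ω, 0 ≤ f ω) (h1 : ∀ ω, f ω ≤ 1) : Integrable f (lam n) :=
  (integrable_const (1:ℝ)).mono' hf.aestronglyMeasurable
    (Filter.Eventually.of_forall fun ω => by
      rw [Real.norm_eq_abs, abs_of_nonneg (h0 ω)]; exact h1 ω)

lemma memS_nonneg {n : ℕ} {s : (Fin n → ℝ) → ℝ} (hs : MemS n s) (ω) : 0 ≤ s ω := by
  rcases hs.2 ω with h | h <;> rw [h] <;> norm_num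

lemma memS_le_one {n : ℕ} {s : (Fin n → ℝ) → ℝ} (hs : MemS n s) (ω) : s ω ≤ 1 := by
  rcases hs.2 ω with h | h <;> rw [h] <;> norm_num

lemma dice_le_one {n : ℕ} {m : (Fin n → ℝ) → ℝ} (hm : MemM n m) (hpos : 0 < vol1 n m)
    {t : (Fin n → ℝ) → ℝ} (ht : MemS n t) : Dice n m t ≤ 1 := by
  have hIt : Integrable t (lam n) := integrable01 ht.1 (memS_nonneg ht) (memS_le_one ht)
  have hIm : Integrable m (lam n) := integrable01 hm.1 (fun ω => (hm.2 ω).1) (fun ω => (hm.2 ω).2)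
  have hItm : Integrable (fun ω => t ω * m ω) (lam n) :=
    integrable01 (ht.1.mul hm.1)
      (fun ω => mul_nonneg (memS_nonneg ht ω) (hm.2 ω).1)
      (fun ω => mul_le_one₀ (memS_le_one ht ω) (hm.2 ω).1 (hm.2 ω).2)
  have h1 : (∫ ω, t ω * m ω ∂(lam n)) ≤ vol1 n t :=
    integral_mono hItm hIt (fun ω => mul_le_of_le_one_right (memS_nonneg ht ω) (hm.2 ω).2)
  have h2 : (∫ ω, t ω * m ω ∂(lam n)) ≤ vol1 n m :=
    integral_mono hItm hIm (fun ω => mul_le_of_le_one_left (hm.2 ω).1 (memS_le_one ht ω))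
  have hVt : 0 ≤ vol1 n t := integral_nonneg (memS_nonneg ht)
  have hden : 0 < vol1 n t + vol1 n m := by linarith
  rw [Dice, div_le_one hden]; linarith

theorem dice_maximizer_volume_ge_half_threshold
    (n : ℕ) (m : (Fin n → ℝ) → ℝ) (hm : MemM n m) (hpos : 0 < vol1 n m)
    (s : (Fin n → ℝ) → ℝ) (hs : MemS n s)
    (hmax : Dice n m s = sSup (Dvals n m)) :
    (lam n {ω | (1:ℝ)/2 ≤ m ω}).toReal ≤ vol1 n s := by
  have hm0 : ∀ ω, 0 ≤ m ω := fun ω => (hm.2 ω).1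
  have hm1 : ∀ ω, m ω ≤ 1 := fun ω => (hm.2 ω).2
  have hIs : Integrable s (lam n) := integrable01 hs.1 (memS_nonneg hs) (memS_le_one hs)
  have hIm : Integrable m (lam n) := integrable01 hm.1 hm0 hm1
  have hIsm : Integrable (fun ω => s ω * m ω) (lam n) :=
    integrable01 (hs.1.mul hm.1)
      (fun ω => mul_nonneg (memS_nonneg hs ω) (hm0 ω))
      (fun ω => mul_le_one₀ (memS_le_one hs ω) (hm0 ω) (hm1 ω))
  set A : Set (Fin n → ℝ) := {ω | (1:ℝ)/2 ≤ m ω} ∩ {ω | s ω = 0} with hAdef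
  have hAmeas : MeasurableSet A :=
    (measurableSet_le measurable_const hm.1).inter (hs.1 (measurableSet_singleton 0))
  set a : ℝ := (lam n A).toReal with hadef
  have ha0 : 0 ≤ a := ENNReal.toReal_nonneg
  set s' : (Fin n → ℝ) → ℝ := fun ω => s ω + A.indicator (fun _ => (1:ℝ)) ω with hs'def
  have hind_meas : Measurable (A.indicator (fun _ => (1:ℝ))) :=
    measurable_const.indicator hAmeas
  have hInd : Integrable (A.indicator (fun _ => (1:ℝ))) (lam n) :=
    integrable01 hind_meas (fun ω => Set.indicator_nonneg (fun _ _ => zero_le_one) ω)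
      (fun ω => Set.indicator_le_self' (fun _ _ => zero_le_one) ω |>.trans_eq rfl |>.trans (by
        by_cases h : ω ∈ A <;> simp [Set.indicator_apply, h]))
  have hs'S : MemS n s' := by
    refine ⟨hs.1.add hind_meas, fun ω => ?_⟩
    by_cases h : ω ∈ A
    · right; have h0 : s ω = 0 := h.2
      simp [hs'def, Set.indicator_of_mem h, h0]
    · simp only [hs'def, Set.indicator_of_notMem h, add_zero]
      exact hs.2 ω
  have hvol_s' : vol1 n s' = vol1 n s + a := by
    rw [vol1, hs'def]
    rw [integral_add hIs hInd, integral_indicator_const (1:ℝ) hAmeas]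
    simp [vol1, hadef]; rfl
  set I : ℝ := ∫ ω, s ω * m ω ∂(lam n) with hIdef
  set J : ℝ := ∫ ω in A, m ω ∂(lam n) with hJdef
  have hIndm : Integrable (A.indicator m) (lam n) := hIm.indicator hAmeas
  have hint_s'm : (∫ ω, s' ω * m ω ∂(lam n)) = I + J := by
    have hpt : ∀ ω, s' ω * m ω = s ω * m ω + A.indicator m ω := by
      intro ω; by_cases h : ω ∈ A
      · have h0 : s ω = 0 := h.2
        simp [hs'def, Set.indicator_of_mem h, h0]
      · simp [hs'def, Set.indicator_of_notMem h]
    calc (∫ ω, s' ω * m ω ∂(lam n))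
        = ∫ ω, (s ω * m ω + A.indicator m ω) ∂(lam n) := by
          exact integral_congr_ae (Filter.Eventually.of_forall hpt)
      _ = I + J := by rw [integral_add hIsm hIndm, integral_indicator hAmeas]
  have hJ_ge : a / 2 ≤ J := by
    have h := setIntegral_mono_on
      (integrableOn_const (measure_lt_top (lam n) A).ne : IntegrableOn (fun _ => (1:ℝ)/2) A (lam n)) hIm.integrableOn hAmeas
      (fun ω hω => hω.1)
    rw [setIntegral_const] at h
    rw [smul_eq_mul] at h
    change a * (1/2) ≤ J at h
    linarith [h]
  have hIJ_le : I + J ≤ vol1 n m := by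
    have hpt : ∀ ω, s ω * m ω + A.indicator m ω ≤ m ω := by
      intro ω; by_cases h : ω ∈ A
      · have h0 : s ω = 0 := h.2
        simp [Set.indicator_of_mem h, h0]
      · simp only [Set.indicator_of_notMem h, add_zero]
        exact mul_le_of_le_one_left (hm0 ω) (memS_le_one hs ω)
    have := integral_mono (hIsm.add hIndm) hIm hpt
    simp only [Pi.add_apply] at this
    rw [integral_add hIsm hIndm, integral_indicator hAmeas] at this
    exact this
  have hI_le : I ≤ vol1 n s :=
    integral_mono hIsm hIs (fun ω => mul_le_of_le_one_right (memS_nonneg hs ω) (hm1 ω))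
  have hI0 : 0 ≤ I := integral_nonneg (fun ω => mul_nonneg (memS_nonneg hs ω) (hm0 ω))
  have hV0 : 0 ≤ vol1 n s := integral_nonneg (memS_nonneg hs)
  have hbdd : BddAbove (Dvals n m) := by
    refine ⟨1, fun x hx => ?_⟩
    obtain ⟨t, ht, rfl⟩ := hx
    exact dice_le_one hm hpos ht
  have hmem : Dice n m s' ∈ Dvals n m := ⟨s', hs'S, rfl⟩
  have hcomp : Dice n m s' ≤ Dice n m s := hmax ▸ le_csSup hbdd hmem
  have hden1 : 0 < vol1 n s + vol1 n m := by linarith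
  have hden2 : 0 < vol1 n s' + vol1 n m := by rw [hvol_s']; linarith
  rw [Dice, Dice, hint_s'm, div_le_div_iff₀ hden2 hden1, hvol_s'] at hcomp
  -- hcomp : 2 * (I + J) * (vol1 n s + vol1 n m) ≤ 2 * I * ((vol1 n s + a) + vol1 n m)
  have hA0 : a ≤ 0 := by
    by_contra hc
    push_neg at hc
    have hIVm : I ≤ vol1 n m - J := by linarith
    nlinarith [mul_le_mul_of_nonneg_right hJ_ge hden1.le,
      mul_le_mul_of_nonneg_right hI_le hc.le,
      mul_le_mul_of_nonneg_right hIVm hc.le,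
      mul_pos hc hc]
  have haz : a = 0 := le_antisymm hA0 ha0
  have hμA : lam n A = 0 := by
    rcases (ENNReal.toReal_eq_zero_iff _).1 haz with h | h
    · exact h
    · exact absurd h (measure_ne_top (lam n) A)
  have hsub : {ω | (1:ℝ)/2 ≤ m ω} ⊆ {ω | s ω = 1} ∪ A := by
    intro ω hω
    rcases hs.2 ω with h | h
    · exact Or.inr ⟨hω, h⟩
    · exact Or.inl h
  have hmono : lam n {ω | (1:ℝ)/2 ≤ m ω} ≤ lam n {ω | s ω = 1} := by
    calc lam n {ω | (1:ℝ)/2 ≤ m ω} ≤ lam n ({ω | s ω = 1} ∪ A) := measure_mono hsub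
      _ ≤ lam n {ω | s ω = 1} + lam n A := measure_union_le _ _
      _ = lam n {ω | s ω = 1} := by rw [hμA, add_zero]
  have hset1 : MeasurableSet {ω | s ω = 1} := hs.1 (measurableSet_singleton 1)
  have hvol : vol1 n s = (lam n {ω | s ω = 1}).toReal := by
    have hpt : ∀ ω, s ω = Set.indicator {ω | s ω = 1} (fun _ => (1:ℝ)) ω := by
      intro ω; rcases hs.2 ω with h | h
      · have : ω ∉ {ω | s ω = 1} := by simp [Set.mem_setOf_eq, h]
        rw [Set.indicator_of_notMem this, h]
      · have : ω ∈ {ω | s ω = 1} := h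
        rw [Set.indicator_of_mem this, h]
    calc vol1 n s = ∫ ω, Set.indicator {ω | s ω = 1} (fun _ => (1:ℝ)) ω ∂(lam n) :=
          integral_congr_ae (Filter.Eventually.of_forall hpt)
      _ = (lam n {ω | s ω = 1}).toReal := by
          rw [integral_indicator_const (1:ℝ) hset1, smul_eq_mul, mul_one]; rfl
  rw [hvol]
  exact ENNReal.toReal_mono (measure_ne_top (lam n) _) hmono
end
end

section
/- Let m ∈ M with ‖m‖₁ > 0 and D* = sup_{s∈S} D_m(s). Then the supremum of D_m over S is attained, and D* equals the Dice score of the threshold segmentation s* = I_{[D*/2, 1]}∘m (indicator of {ω : m(ω) ≥ D*/2}). -/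
open MeasureTheory Filter

noncomputable section

lemma lam_prob_s9 (n : ℕ) : IsProbabilityMeasure (lam n) := by
  constructor
  rw [lam, Measure.restrict_apply_univ, cube, Set.pi_univ_Icc, Real.volume_Icc_pi]
  simp

lemma integrable_Icc {n : ℕ} {f : (Fin n → ℝ) → ℝ} (hf : Measurable f)
    (hb : ∀ ω, f ω ∈ Set.Icc (0:ℝ) 1) : Integrable f (lam n) := by
  have := lam_prob_s9 n
  refine (integrable_const (1:ℝ)).mono' hf.aestronglyMeasurable (ae_of_all _ fun ω => ?_)
  rw [Real.norm_eq_abs, abs_le]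
  exact ⟨by linarith [(hb ω).1], by simpa using (hb ω).2⟩

lemma memS_Icc {n : ℕ} {s : (Fin n → ℝ) → ℝ} (hs : MemS n s) (ω : Fin n → ℝ) :
    s ω ∈ Set.Icc (0:ℝ) 1 := by
  rcases hs.2 ω with h | h <;> rw [h] <;> norm_num

theorem dice_sup_attained_at_threshold
    (n : ℕ) (m : (Fin n → ℝ) → ℝ) (hm : MemM n m) (hpos : 0 < vol1 n m)
    (Dstar : ℝ) (hD : Dstar = sSup (Dvals n m)) :
    MemS n (fun ω => if Dstar / 2 ≤ m ω then (1:ℝ) else 0) ∧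
      Dice n m (fun ω => if Dstar / 2 ≤ m ω then (1:ℝ) else 0) = Dstar := by
  obtain ⟨hmMeas, hmIcc⟩ := hm
  have hprob := lam_prob_s9 n
  set s0 : (Fin n → ℝ) → ℝ := fun ω => if Dstar / 2 ≤ m ω then (1:ℝ) else 0 with hs0
  -- generic facts for s ∈ S
  have hIntM : Integrable m (lam n) := integrable_Icc hmMeas hmIcc
  have hIntS : ∀ s, MemS n s → Integrable s (lam n) :=
    fun s hs => integrable_Icc hs.1 (memS_Icc hs)
  have hprodIcc : ∀ s, MemS n s → ∀ ω, s ω * m ω ∈ Set.Icc (0:ℝ) 1 := by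
    intro s hs ω
    have h1 := memS_Icc hs ω
    have h2 := hmIcc ω
    exact ⟨mul_nonneg h1.1 h2.1, mul_le_one₀ h1.2 h2.1 h2.2⟩
  have hIntP : ∀ s, MemS n s → Integrable (fun ω => s ω * m ω) (lam n) :=
    fun s hs => integrable_Icc (hs.1.mul hmMeas) (hprodIcc s hs)
  have hVnonneg : ∀ s, MemS n s → 0 ≤ vol1 n s :=
    fun s hs => integral_nonneg fun ω => (memS_Icc hs ω).1
  have hVle : ∀ s, MemS n s → vol1 n s ≤ 1 := by
    intro s hs
    have h : vol1 n s ≤ ∫ _ω, (1:ℝ) ∂(lam n) :=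
      integral_mono (hIntS s hs) (integrable_const 1) fun ω => (memS_Icc hs ω).2
    simpa using h
  have hDice_le_one : ∀ s, MemS n s → Dice n m s ≤ 1 := by
    intro s hs
    have h1 : (∫ ω, s ω * m ω ∂(lam n)) ≤ vol1 n s :=
      integral_mono (hIntP s hs) (hIntS s hs) fun ω =>
        mul_le_of_le_one_right (memS_Icc hs ω).1 (hmIcc ω).2
    have h2 : (∫ ω, s ω * m ω ∂(lam n)) ≤ vol1 n m :=
      integral_mono (hIntP s hs) hIntM fun ω =>
        mul_le_of_le_one_left (hmIcc ω).1 (memS_Icc hs ω).2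
    rw [Dice, div_le_one (by linarith [hVnonneg s hs])]
    linarith
  have hbdd : BddAbove (Dvals n m) := ⟨1, by rintro x ⟨s, hs, rfl⟩; exact hDice_le_one s hs⟩
  have hzeroS : MemS n (fun _ => (0:ℝ)) := ⟨measurable_const, fun _ => Or.inl rfl⟩
  have hzero : (0:ℝ) ∈ Dvals n m := ⟨fun _ => 0, hzeroS, by simp [Dice, vol1]⟩
  have hne : (Dvals n m).Nonempty := ⟨0, hzero⟩
  have hDle : ∀ s, MemS n s → Dice n m s ≤ Dstar :=
    fun s hs => hD ▸ le_csSup hbdd ⟨s, hs, rfl⟩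
  have hs0S : MemS n s0 :=
    ⟨Measurable.ite (measurableSet_le measurable_const hmMeas) measurable_const
        measurable_const,
      fun ω => by by_cases h : Dstar / 2 ≤ m ω <;> simp [hs0, h]⟩
  have hVd0 : 0 < vol1 n s0 + vol1 n m := by linarith [hVnonneg s0 hs0S]
  -- expansion of the linearized functional
  have hint : ∀ s, MemS n s → Integrable (fun ω => s ω * (2 * m ω - Dstar)) (lam n) := by
    intro t ht
    have heq : (fun ω => t ω * (2 * m ω - Dstar)) = fun ω => 2 * (t ω * m ω) - Dstar * t ω := by
      funext ω; ring
    rw [heq]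
    exact ((hIntP t ht).const_mul 2).sub ((hIntS t ht).const_mul Dstar)
  have hexp : ∀ s, MemS n s →
      (∫ ω, s ω * (2 * m ω - Dstar) ∂(lam n)) =
        2 * (∫ ω, s ω * m ω ∂(lam n)) - Dstar * vol1 n s := by
    intro s hs
    have heq : (fun ω => s ω * (2 * m ω - Dstar)) = fun ω => 2 * (s ω * m ω) - Dstar * s ω := by
      funext ω; ring
    rw [heq, integral_sub ((hIntP s hs).const_mul 2) ((hIntS s hs).const_mul Dstar),
      integral_const_mul, integral_const_mul]
    rfl
  -- pointwise optimality of s0 for the linearized functional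
  have hmono : ∀ s, MemS n s →
      (∫ ω, s ω * (2 * m ω - Dstar) ∂(lam n)) ≤ ∫ ω, s0 ω * (2 * m ω - Dstar) ∂(lam n) := by
    intro s hs
    refine integral_mono (hint s hs) (hint s0 hs0S) fun ω => ?_
    have h0 := (memS_Icc hs ω).1
    have h1 := (memS_Icc hs ω).2
    by_cases h : Dstar / 2 ≤ m ω
    · have hs0ω : s0 ω = 1 := by simp [hs0, h]
      rw [hs0ω, one_mul]
      nlinarith
    · have hs0ω : s0 ω = 0 := by simp [hs0, h]
      rw [hs0ω, zero_mul]
      push_neg at h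
      nlinarith
  -- upper bound: D(s0) ≤ Dstar
  have hup : 2 * (∫ ω, s0 ω * m ω ∂(lam n)) ≤ Dstar * (vol1 n s0 + vol1 n m) := by
    have h := hDle s0 hs0S
    rw [Dice, div_le_iff₀ hVd0] at h
    linarith
  -- lower bound by contradiction
  have hlow : Dstar * (vol1 n s0 + vol1 n m) ≤ 2 * (∫ ω, s0 ω * m ω ∂(lam n)) := by
    by_contra hcon
    push_neg at hcon
    set ε := Dstar * (vol1 n s0 + vol1 n m) - 2 * (∫ ω, s0 ω * m ω ∂(lam n)) with hε
    have hεpos : 0 < ε := by rw [hε]; linarith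
    have h1Vm : (0:ℝ) < 1 + vol1 n m := by linarith
    have hq : 0 ≤ ε / (1 + vol1 n m) := div_nonneg hεpos.le h1Vm.le
    have hcancel : ε / (1 + vol1 n m) * (1 + vol1 n m) = ε := div_mul_cancel₀ _ h1Vm.ne'
    have hb : ∀ s, MemS n s → Dice n m s ≤ Dstar - ε / (1 + vol1 n m) := by
      intro s hs
      have h3 := hmono s hs
      rw [hexp s hs, hexp s0 hs0S] at h3
      have hVd : 0 < vol1 n s + vol1 n m := by linarith [hVnonneg s hs]
      have hVdle : vol1 n s + vol1 n m ≤ 1 + vol1 n m := by linarith [hVle s hs]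
      rw [Dice, div_le_iff₀ hVd]
      nlinarith [mul_le_mul_of_nonneg_left hVdle hq]
    have hsup : sSup (Dvals n m) ≤ Dstar - ε / (1 + vol1 n m) :=
      csSup_le hne (by rintro x ⟨s, hs, rfl⟩; exact hb s hs)
    rw [← hD] at hsup
    have hqpos : 0 < ε / (1 + vol1 n m) := div_pos hεpos h1Vm
    linarith
  have h2I : 2 * (∫ ω, s0 ω * m ω ∂(lam n)) = Dstar * (vol1 n s0 + vol1 n m) :=
    le_antisymm hup hlow
  refine ⟨hs0S, ?_⟩
  rw [Dice, h2I, mul_div_assoc, div_self hVd0.ne', mul_one]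
end
end

section
/- Monotonicity lemma used for Dice threshold optimality: let m ∈ M, s ∈ S with D = D_m(s), and let A ⊆ Ω be measurable with λ(A) > 0, A disjoint from {s = 1}. If m(ω) > D/2 for all ω ∈ A, then D_m(s ∨ 1_A) > D_m(s); symmetrically, if B ⊆ {s = 1} with λ(B) > 0 and m(ω) < D/2 on B, then D_m(s − 1_B) > D_m(s). -/
open MeasureTheory Filter

noncomputable section

instance lam_finite (n : ℕ) : IsFiniteMeasure (lam n) := by
  constructor
  rw [lam, Measure.restrict_apply_univ, cube, Set.pi_univ_Icc]
  rw [Real.volume_Icc_pi]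
  simp

lemma integ_of_bound {n : ℕ} {f : (Fin n → ℝ) → ℝ} (hf : Measurable f)
    (hb : ∀ ω, |f ω| ≤ 1) : Integrable f (lam n) :=
  (integrable_const (1 : ℝ)).mono' hf.aestronglyMeasurable (Filter.Eventually.of_forall hb)

lemma setIntegral_pos_of_pos {X : Type*} [MeasurableSpace X] {μ : Measure X}
    {A : Set X} (hA : MeasurableSet A) (hμ : 0 < μ A) {g : X → ℝ}
    (hg : ∀ x ∈ A, 0 < g x) (hint : IntegrableOn g A μ) :
    0 < ∫ x in A, g x ∂μ := by
  rw [setIntegral_pos_iff_support_of_nonneg_ae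
    ((ae_restrict_iff' hA).2 (Filter.Eventually.of_forall fun x hx => (hg x hx).le)) hint]
  exact hμ.trans_le (measure_mono fun x hx => ⟨(hg x hx).ne', hx⟩)

theorem dice_monotonicity_lemma
    (n : ℕ) (m : (Fin n → ℝ) → ℝ) (hm : MemM n m) (hpos : 0 < vol1 n m)
    (s : (Fin n → ℝ) → ℝ) (hs : MemS n s) :
    (∀ A : Set (Fin n → ℝ), MeasurableSet A → 0 < lam n A →
      (∀ ω ∈ A, s ω = 0) → (∀ ω ∈ A, Dice n m s / 2 < m ω) →
      Dice n m s < Dice n m (fun ω => max (s ω) (A.indicator 1 ω))) ∧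
    (∀ B : Set (Fin n → ℝ), MeasurableSet B → 0 < lam n B →
      (∀ ω ∈ B, s ω = 1) → (∀ ω ∈ B, m ω < Dice n m s / 2) →
      Dice n m s < Dice n m (fun ω => s ω - B.indicator 1 ω)) := by
  obtain ⟨hmm, hm01⟩ := hm
  obtain ⟨hsm, hs01⟩ := hs
  have hs0 : ∀ ω, 0 ≤ s ω := fun ω => by rcases hs01 ω with h | h <;> simp [h]
  have hs1 : ∀ ω, s ω ≤ 1 := fun ω => by rcases hs01 ω with h | h <;> simp [h]
  have hm0 : ∀ ω, 0 ≤ m ω := fun ω => (hm01 ω).1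
  have hm1 : ∀ ω, m ω ≤ 1 := fun ω => (hm01 ω).2
  have him : Integrable m (lam n) :=
    integ_of_bound hmm fun ω => abs_le.2 ⟨by linarith [hm0 ω], hm1 ω⟩
  have his : Integrable s (lam n) :=
    integ_of_bound hsm fun ω => abs_le.2 ⟨by linarith [hs0 ω], hs1 ω⟩
  have hism : Integrable (fun ω => s ω * m ω) (lam n) := by
    refine integ_of_bound (hsm.mul hmm) fun ω => abs_le.2 ⟨?_, ?_⟩
    · nlinarith [hs0 ω, hm0 ω]
    · nlinarith [hs0 ω, hs1 ω, hm0 ω, hm1 ω]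
  have hV0 : 0 ≤ vol1 n s := integral_nonneg hs0
  have hd : 0 < vol1 n s + vol1 n m := by linarith
  set P := ∫ ω, s ω * m ω ∂(lam n) with hP
  set V := vol1 n s with hV
  set W := vol1 n m with hW
  have hDP : Dice n m s * (V + W) = 2 * P := by
    rw [Dice]; field_simp; exact mul_div_cancel_right₀ _ hd.ne'
  constructor
  · intro A hA hApos hsA hmA
    have hind : Integrable (A.indicator (1 : (Fin n → ℝ) → ℝ)) (lam n) := by
      refine integ_of_bound (measurable_one.indicator hA) fun ω => ?_
      by_cases h : ω ∈ A <;> simp [Set.indicator, h]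
    have heq : (fun ω => max (s ω) (A.indicator 1 ω)) =
        fun ω => s ω + A.indicator 1 ω := by
      funext ω
      by_cases h : ω ∈ A
      · simp [Set.indicator_of_mem h, hsA ω h]
      · simp [Set.indicator_of_notMem h, max_eq_left (hs0 ω)]
    have hvol : vol1 n (fun ω => s ω + A.indicator 1 ω) = V + (lam n A).toReal := by
      rw [vol1, integral_add his hind, integral_indicator_one hA]; rfl
    have hmul : (fun ω => (s ω + A.indicator 1 ω) * m ω) =
        fun ω => s ω * m ω + A.indicator m ω := by
      funext ω; by_cases h : ω ∈ A <;> simp [Set.indicator, h] <;> ring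
    have hint : (∫ ω, (s ω + A.indicator 1 ω) * m ω ∂(lam n)) =
        P + ∫ ω in A, m ω ∂(lam n) := by
      rw [hmul, integral_add hism (him.indicator hA), integral_indicator hA]
    set Q := ∫ ω in A, m ω ∂(lam n) with hQ
    set a := (lam n A).toReal with haa
    have ha : 0 < a := ENNReal.toReal_pos hApos.ne' (measure_ne_top _ _)
    have hkey : Dice n m s / 2 * a < Q := by
      have h := setIntegral_pos_of_pos hA hApos
        (g := fun ω => m ω - Dice n m s / 2)
        (fun ω hω => sub_pos.2 (hmA ω hω))
        ((him.sub (integrable_const _)).integrableOn)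
      rw [integral_sub him.integrableOn
        (integrableOn_const (measure_ne_top _ _) enorm_ne_top), setIntegral_const,
        smul_eq_mul, measureReal_def] at h
      rw [mul_comm]; linarith
    have h2 : P * a < Q * (V + W) := by
      nlinarith [mul_lt_mul_of_pos_right hkey hd]
    rw [heq, Dice, Dice, hvol, hint, ← hP, ← hV, ← hW]
    rw [div_lt_div_iff₀ hd (by linarith)]
    nlinarith
  · intro B hB hBpos hsB hmB
    have hind : Integrable (B.indicator (1 : (Fin n → ℝ) → ℝ)) (lam n) := by
      refine integ_of_bound (measurable_one.indicator hB) fun ω => ?_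
      by_cases h : ω ∈ B <;> simp [Set.indicator, h]
    have hvol : vol1 n (fun ω => s ω - B.indicator 1 ω) = V - (lam n B).toReal := by
      rw [vol1, integral_sub his hind, integral_indicator_one hB]; rfl
    have hvol0 : 0 ≤ vol1 n (fun ω => s ω - B.indicator 1 ω) := by
      refine integral_nonneg fun ω => ?_
      by_cases h : ω ∈ B
      · simp [Set.indicator_of_mem h, hsB ω h]
      · simp [Set.indicator_of_notMem h, hs0 ω]
    have hmul : (fun ω => (s ω - B.indicator 1 ω) * m ω) =
        fun ω => s ω * m ω - B.indicator m ω := by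
      funext ω; by_cases h : ω ∈ B <;> simp [Set.indicator, h] <;> ring
    have hint : (∫ ω, (s ω - B.indicator 1 ω) * m ω ∂(lam n)) =
        P - ∫ ω in B, m ω ∂(lam n) := by
      rw [hmul, integral_sub hism (him.indicator hB), integral_indicator hB]
    set Q := ∫ ω in B, m ω ∂(lam n) with hQ
    set b := (lam n B).toReal with hbb
    have hb : 0 < b := ENNReal.toReal_pos hBpos.ne' (measure_ne_top _ _)
    have hkey : Q < Dice n m s / 2 * b := by
      have h := setIntegral_pos_of_pos hB hBpos
        (g := fun ω => Dice n m s / 2 - m ω)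
        (fun ω hω => sub_pos.2 (hmB ω hω))
        (((integrable_const _).sub him).integrableOn)
      rw [integral_sub ((integrable_const _).integrableOn)
        him.integrableOn, setIntegral_const, smul_eq_mul, measureReal_def] at h
      rw [mul_comm]; linarith
    have h2 : Q * (V + W) < P * b := by
      nlinarith [mul_lt_mul_of_pos_right hkey hd]
    have hd2 : 0 < V - b + W := by
      rw [hvol] at hvol0; linarith
    rw [Dice, Dice, hvol, hint, ← hP, ← hV, ← hW]
    rw [div_lt_div_iff₀ hd hd2]
    nlinarith
end
end
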